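/- Let $K$ be a field and let $a, b, c$ be algebraically independent over $K$. A monomial $a^i b^j c^k$ (with $i, j, k \geq 0$) lies in the subalgebra $K[ab, bc, ca]$ of $K[a, b, c]$ if and only if $i + j + k$ is even and $i + j \geq k$, $j + k \geq i$, $i + k \geq j$. -/

import Mathlib

open MvPolynomial Finsupp

noncomputable def dAB : Fin 3 →₀ ℕ := single 0 1 + single 1 1
noncomputable def dBC : Fin 3 →₀ ℕ := single 1 1 + single 2 1
noncomputable def dCA : Fin 3 →₀ ℕ := single 2 1 + single 0 1

lemma aux_closure_monomials (K : Type*) [Field K] :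
    ∀ x ∈ Submonoid.closure ({(X 0 * X 1 : MvPolynomial (Fin 3) K), X 1 * X 2, X 2 * X 0}),
      ∃ d ∈ AddSubmonoid.closure {dAB, dBC, dCA}, x = monomial d (1 : K) := by
  intro x hx
  induction hx using Submonoid.closure_induction with
  | mem y hy =>
      simp only [Set.mem_insert_iff, Set.mem_singleton_iff] at hy
      rcases hy with h | h | h
      · exact ⟨dAB, AddSubmonoid.subset_closure (by simp), by
          simp [h, dAB, monomial_mul, X]⟩
      · exact ⟨dBC, AddSubmonoid.subset_closure (by simp), by
          simp [h, dBC, monomial_mul, X]⟩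
      · exact ⟨dCA, AddSubmonoid.subset_closure (by simp), by
          simp [h, dCA, monomial_mul, X]⟩
  | one => exact ⟨0, zero_mem _, by simp [monomial_zero']⟩
  | mul y z hy hz ihy ihz =>
      obtain ⟨d, hd, rfl⟩ := ihy
      obtain ⟨e, he, rfl⟩ := ihz
      exact ⟨d + e, add_mem hd he, by simp [monomial_mul]⟩

open MvPolynomial in
/-- A monomial `aⁱbʲcᵏ` lies in `K[ab, bc, ca]` iff `i + j + k` is even and
`i + j ≥ k`, `j + k ≥ i`, `i + k ≥ j`.  Here `a = X 0`, `b = X 1`, `c = X 2`. -/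
theorem stmt_14 (K : Type*) [Field K] (i j k : ℕ) :
    (X 0 ^ i * X 1 ^ j * X 2 ^ k : MvPolynomial (Fin 3) K) ∈
      Algebra.adjoin K
        {(X 0 * X 1 : MvPolynomial (Fin 3) K), X 1 * X 2, X 2 * X 0} ↔
    (Even (i + j + k) ∧ k ≤ i + j ∧ i ≤ j + k ∧ j ≤ i + k) := by
  have hmono : (X 0 ^ i * X 1 ^ j * X 2 ^ k : MvPolynomial (Fin 3) K)
      = monomial (single 0 i + single 1 j + single 2 k) (1 : K) := by
    simp [X_pow_eq_monomial, monomial_mul]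
  constructor
  · intro h
    rw [← Subalgebra.mem_toSubmodule, Algebra.adjoin_eq_span] at h
    have hsub : (Submonoid.closure ({(X 0 * X 1 : MvPolynomial (Fin 3) K), X 1 * X 2, X 2 * X 0}) : Set (MvPolynomial (Fin 3) K))
        ⊆ (basisMonomials (Fin 3) K) '' (AddSubmonoid.closure {dAB, dBC, dCA}) := by
      intro x hx
      obtain ⟨d, hd, rfl⟩ := aux_closure_monomials K x hx
      exact ⟨d, hd, by simp [coe_basisMonomials]⟩
    have h2 := Submodule.span_mono hsub h
    rw [hmono] at h2
    have h3 : (single 0 i + single 1 j + single 2 k : Fin 3 →₀ ℕ)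
        ∈ AddSubmonoid.closure {dAB, dBC, dCA} := by
      have : monomial (single 0 i + single 1 j + single 2 k) (1 : K)
          = basisMonomials (Fin 3) K (single 0 i + single 1 j + single 2 k) := by
        simp [coe_basisMonomials]
      rw [this] at h2
      exact (Module.Basis.self_mem_span_image _).1 h2
    -- now extract inequalities
    have key : ∀ d ∈ AddSubmonoid.closure ({dAB, dBC, dCA} : Set (Fin 3 →₀ ℕ)),
        Even (d 0 + d 1 + d 2) ∧ d 2 ≤ d 0 + d 1 ∧ d 0 ≤ d 1 + d 2 ∧ d 1 ≤ d 0 + d 2 := by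
      intro d hd
      induction hd using AddSubmonoid.closure_induction with
      | mem y hy =>
          rcases hy with h | h | h <;> subst h <;>
            simp [dAB, dBC, dCA, Finsupp.add_apply, Finsupp.single_apply]
      | zero => simp
      | add y z hy hz ihy ihz =>
          obtain ⟨e1, e2, e3, e4⟩ := ihy
          obtain ⟨f1, f2, f3, f4⟩ := ihz
          refine ⟨?_, ?_, ?_, ?_⟩ <;> simp only [Finsupp.add_apply] <;> [skip; omega; omega; omega]
          rcases e1 with ⟨m, hm⟩; rcases f1 with ⟨n, hn⟩
          exact ⟨m + n, by omega⟩
    have := key _ h3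
    simpa [Finsupp.add_apply, Finsupp.single_apply] using this
  · rintro ⟨⟨m, hm⟩, h1, h2, h3⟩
    obtain ⟨p, q, r, hp, hq, hr⟩ : ∃ p q r, i = p + r ∧ j = p + q ∧ k = q + r := by
      refine ⟨(i + j - k) / 2, (j + k - i) / 2, (i + k - j) / 2, ?_, ?_, ?_⟩ <;> omega
    subst hp hq hr
    have : (X 0 ^ (p + r) * X 1 ^ (p + q) * X 2 ^ (q + r) : MvPolynomial (Fin 3) K)
        = (X 0 * X 1) ^ p * (X 1 * X 2) ^ q * (X 2 * X 0) ^ r := by ring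
    rw [this]
    exact mul_mem (mul_mem (pow_mem (Algebra.subset_adjoin (by simp)) p)
      (pow_mem (Algebra.subset_adjoin (by simp)) q))
      (pow_mem (Algebra.subset_adjoin (by simp)) r)
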